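/- Let b ≥ 2 and d ≥ 1, let G be the butterfly graph of degree b and depth d, let H be a subset of its edges, and let M be the set of edges of G not in H. For each edge e ∈ M from (i−1, u) to (i, u′), define the axis-parallel rectangle R(e) = [α(e)·b^{i−1}, (α(e)+1)·b^{i−1}) × [β(e)·b^{d−i}, (β(e)+1)·b^{d−i}), where α(e) = Σ_{j=i}^{d} u(j)·b^{j−i} and β(e) = Σ_{j=1}^{i} u′(j)·b^{i−j}. Then for all v, w ∈ [b]^d, the sink (d, w) is reachable from the source (0, v) using only edges of H if and only if the point (src(v), snk(w)) lies in none of the rectangles R(e) for e ∈ M. -/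

import Mathlib

open Finset

/-- Vertices of the butterfly of degree `b` and depth `d`: a level in `{0,…,d}`
together with a vector in `[b]^d` (coordinates `1,…,d` are indexed by `Fin d`). -/
abbrev BVtx (b d : ℕ) := Fin (d + 1) × (Fin d → Fin b)

/-- The edge relation of the butterfly: an edge goes from level `i−1` to level `i`
(`0`-indexed: from level `p.1` to level `p.1 + 1`) and may change only the
coordinate whose (`0`-indexed) index equals the level of the tail. -/
def bEdge (b d : ℕ) (p q : BVtx b d) : Prop :=
  (q.1 : ℕ) = (p.1 : ℕ) + 1 ∧ ∀ j : Fin d, (j : ℕ) ≠ (p.1 : ℕ) → p.2 j = q.2 j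

/-- The mixed vector `m_i(v,w)`: its first `i` coordinates come from `w` and the
remaining ones from `v` (`0`-indexed: coordinate `j` is `w j` iff `j < i`). -/
def mix {b d : ℕ} (v w : Fin d → Fin b) (i : ℕ) : Fin d → Fin b :=
  fun j => if (j : ℕ) < i then w j else v j

/-- Encoding of a source vector: `src(v) = ∑_j v(j)·b^(j−1)` (`0`-indexed: `b^j`). -/
def srcEnc {b d : ℕ} (v : Fin d → Fin b) : ℕ :=
  ∑ j : Fin d, (v j : ℕ) * b ^ (j : ℕ)

/-- Encoding of a sink vector: `snk(w) = ∑_j w(j)·b^(d−j)` (`0`-indexed: `b^(d−1−j)`). -/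
def snkEnc {b d : ℕ} (w : Fin d → Fin b) : ℕ :=
  ∑ j : Fin d, (w j : ℕ) * b ^ (d - 1 - (j : ℕ))

/-- `α = ∑_{j ≥ i} u(j)·b^(j−i)` over the coordinates `j ≥ i` (`0`-indexed). -/
def alphaE {b d : ℕ} (i : ℕ) (u : Fin d → Fin b) : ℕ :=
  ∑ j ∈ univ.filter (fun j : Fin d => i ≤ (j : ℕ)), (u j : ℕ) * b ^ ((j : ℕ) - i)

/-- `β = ∑_{j ≤ i} u′(j)·b^(i−j)` over the coordinates `j ≤ i` (`0`-indexed). -/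
def betaE {b d : ℕ} (i : ℕ) (u' : Fin d → Fin b) : ℕ :=
  ∑ j ∈ univ.filter (fun j : Fin d => (j : ℕ) ≤ i), (u' j : ℕ) * b ^ (i - (j : ℕ))



lemma pack_lt {b n : ℕ} (f : Fin n → Fin b) : ∑ t : Fin n, (f t : ℕ) * b ^ (t : ℕ) < b ^ n := by
  have h := (finFunctionFinEquiv f).isLt
  rwa [finFunctionFinEquiv_apply] at h

lemma pack_eq_iff {b n : ℕ} (f g : Fin n → Fin b) :
    (∑ t : Fin n, (f t : ℕ) * b ^ (t : ℕ)) = (∑ t : Fin n, (g t : ℕ) * b ^ (t : ℕ)) ↔ ∀ t, f t = g t := by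
  constructor
  · intro h t
    have : finFunctionFinEquiv f = finFunctionFinEquiv g := by
      apply Fin.val_injective
      rw [finFunctionFinEquiv_apply, finFunctionFinEquiv_apply]; exact h
    have := finFunctionFinEquiv.injective this
    exact congrFun this t
  · intro h
    exact Finset.sum_congr rfl (fun t _ => by rw [h t])

lemma interval_iff {A A' L B : ℕ} (hL : L < B) :
    (A * B ≤ L + B * A' ∧ L + B * A' < (A + 1) * B) ↔ A' = A := by
  constructor
  · rintro ⟨h1, h2⟩
    by_contra hne
    rcases Nat.lt_or_ge A' A with h | h
    · have : B * (A' + 1) ≤ B * A := Nat.mul_le_mul_left B h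
      have h3 : L + B * A' < B * A := by
        calc L + B * A' < B + B * A' := by omega
        _ = B * (A' + 1) := by ring
        _ ≤ B * A := this
      have h4 : A * B = B * A := by ring
      omega
    · have h' : A < A' := lt_of_le_of_ne h (Ne.symm hne)
      have : B * (A + 1) ≤ B * A' := Nat.mul_le_mul_left B h'
      have h3 : (A + 1) * B ≤ L + B * A' := by
        calc (A + 1) * B = B * (A + 1) := by ring
        _ ≤ B * A' := this
        _ ≤ L + B * A' := Nat.le_add_left _ _
      omega
  · rintro rfl
    constructor
    · calc A' * B = B * A' := by ring
      _ ≤ L + B * A' := Nat.le_add_left _ _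
    · calc L + B * A' < B + B * A' := by omega
      _ = (A' + 1) * B := by ring

lemma alphaE_eq {b d : ℕ} (i : ℕ) (hi : i ≤ d) (u : Fin d → Fin b) :
    alphaE i u = ∑ t : Fin (d - i), (u ⟨i + t, by have := t.2; omega⟩ : ℕ) * b ^ (t : ℕ) := by
  unfold alphaE
  refine Finset.sum_bij' (fun j hj => ⟨(j : ℕ) - i, by
      simp only [mem_filter, mem_univ, true_and] at hj; have := j.2; omega⟩)
    (fun t _ => ⟨i + (t : ℕ), by have := t.2; omega⟩) ?_ ?_ ?_ ?_ ?_
  · intro a ha; exact mem_univ _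
  · intro t _; simp only [mem_filter, mem_univ, true_and]; omega
  · intro a ha; simp only [mem_filter, mem_univ, true_and] at ha; ext; simp; omega
  · intro t _; ext; simp
  · intro a ha; simp only [mem_filter, mem_univ, true_and] at ha
    have hax : (⟨i + ((a : ℕ) - i), by have := a.2; omega⟩ : Fin d) = a := by
      ext; simp; omega
    simp only [hax]

lemma betaE_eq {b d : ℕ} (i : ℕ) (hi : i < d) (u' : Fin d → Fin b) :
    betaE i u' = ∑ t : Fin (i + 1), (u' ⟨i - t, by omega⟩ : ℕ) * b ^ (t : ℕ) := by
  unfold betaE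
  refine Finset.sum_bij' (fun j hj => ⟨i - (j : ℕ), by
      simp only [mem_filter, mem_univ, true_and] at hj; omega⟩)
    (fun t _ => ⟨i - (t : ℕ), by omega⟩) ?_ ?_ ?_ ?_ ?_
  · intro a ha; exact mem_univ _
  · intro t _; simp only [mem_filter, mem_univ, true_and]; omega
  · intro a ha; simp only [mem_filter, mem_univ, true_and] at ha; ext; simp; omega
  · intro t _; have := t.2; ext; simp; omega
  · intro a ha; simp only [mem_filter, mem_univ, true_and] at ha
    have hax : (⟨i - (i - (a : ℕ)), by omega⟩ : Fin d) = a := by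
      ext; simp; omega
    simp only [hax]

lemma src_split {b d : ℕ} (i : ℕ) (hi : i < d) (v : Fin d → Fin b) :
    srcEnc v = (∑ t : Fin i, (v ⟨t, by have := t.2; omega⟩ : ℕ) * b ^ (t : ℕ))
      + b ^ i * alphaE i v := by
  unfold srcEnc alphaE
  rw [← Finset.sum_filter_add_sum_filter_not univ (fun j : Fin d => (j : ℕ) < i)]
  congr 1
  · refine Finset.sum_bij' (fun j hj => ⟨(j : ℕ), by
        simp only [mem_filter, mem_univ, true_and] at hj; omega⟩)
      (fun t _ => ⟨(t : ℕ), by have := t.2; omega⟩) ?_ ?_ ?_ ?_ ?_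
    · intro a ha; exact mem_univ _
    · intro t _; simp only [mem_filter, mem_univ, true_and]; have := t.2; omega
    · intro a ha; ext; simp
    · intro t _; ext; simp
    · intro a ha; rfl
  · rw [Finset.mul_sum]
    refine Finset.sum_congr ?_ (fun j hj => ?_)
    · ext j; simp
    · simp only [mem_filter, mem_univ, true_and, not_lt] at hj
      rw [← mul_assoc, mul_comm (b ^ i), mul_assoc, ← pow_add]
      congr 2
      omega

lemma snk_split {b d : ℕ} (i : ℕ) (hi : i < d) (w : Fin d → Fin b) :
    snkEnc w = (∑ t : Fin (d - 1 - i), (w ⟨d - 1 - t, by have := t.2; omega⟩ : ℕ) * b ^ (t : ℕ))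
      + b ^ (d - 1 - i) * betaE i w := by
  unfold snkEnc betaE
  rw [← Finset.sum_filter_add_sum_filter_not univ (fun j : Fin d => i < (j : ℕ))]
  congr 1
  · refine Finset.sum_bij' (fun j hj => ⟨d - 1 - (j : ℕ), by
        simp only [mem_filter, mem_univ, true_and] at hj; have := j.2; omega⟩)
      (fun t _ => ⟨d - 1 - (t : ℕ), by have := t.2; omega⟩) ?_ ?_ ?_ ?_ ?_
    · intro a ha; exact mem_univ _
    · intro t _; simp only [mem_filter, mem_univ, true_and]; have := t.2; omega
    · intro a ha; simp only [mem_filter, mem_univ, true_and] at ha; have := a.2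
      ext; simp; all_goals omega
    · intro t _; have := t.2; ext; simp; all_goals omega
    · intro a ha; simp only [mem_filter, mem_univ, true_and] at ha; have ha2 := a.2
      have hax : (⟨d - 1 - (d - 1 - (a : ℕ)), by omega⟩ : Fin d) = a := by
        ext; simp; omega
      have hexp : d - 1 - (a : ℕ) = d - 1 - (a : ℕ) := rfl
      simp only [hax]
  · rw [Finset.mul_sum]
    refine Finset.sum_congr ?_ (fun j hj => ?_)
    · ext j; simp
    · simp only [mem_filter, mem_univ, true_and, not_lt] at hj
      rw [← mul_assoc, mul_comm (b ^ (d - 1 - i)), mul_assoc, ← pow_add]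
      congr 2
      omega

lemma src_rect {b d : ℕ} (i : ℕ) (hi : i < d) (v u : Fin d → Fin b) :
    (alphaE i u * b ^ i ≤ srcEnc v ∧ srcEnc v < (alphaE i u + 1) * b ^ i)
      ↔ ∀ j : Fin d, i ≤ (j : ℕ) → v j = u j := by
  rw [src_split i hi v, interval_iff (pack_lt _),
    alphaE_eq i (le_of_lt hi) v, alphaE_eq i (le_of_lt hi) u, pack_eq_iff]
  constructor
  · intro h j hj
    have hjd := j.2
    have h2 := h ⟨(j : ℕ) - i, by omega⟩
    have hj' : (⟨i + ((j : ℕ) - i), by omega⟩ : Fin d) = j := by ext; simp; omega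
    simpa only [hj'] using h2
  · intro h t
    exact h _ (by simp)

lemma snk_rect {b d : ℕ} (i : ℕ) (hi : i < d) (w u' : Fin d → Fin b) :
    (betaE i u' * b ^ (d - 1 - i) ≤ snkEnc w ∧ snkEnc w < (betaE i u' + 1) * b ^ (d - 1 - i))
      ↔ ∀ j : Fin d, (j : ℕ) ≤ i → w j = u' j := by
  rw [snk_split i hi w, interval_iff (pack_lt _),
    betaE_eq i hi w, betaE_eq i hi u', pack_eq_iff]
  constructor
  · intro h j hj
    have h2 := h ⟨i - (j : ℕ), by omega⟩
    have hj' : (⟨i - (i - (j : ℕ)), by omega⟩ : Fin d) = j := by ext; simp; omega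
    simpa only [hj'] using h2
  · intro h t
    have := t.2
    exact h _ (by simp)

/-- The canonical `k`-th edge of the path from `(0,v)` to `(d,w)`. -/
def canE {b d : ℕ} (v w : Fin d → Fin b) (k : Fin d) : BVtx b d × BVtx b d :=
  ((k.castSucc, mix v w (k : ℕ)), (k.succ, mix v w ((k : ℕ) + 1)))

lemma canE_bEdge {b d : ℕ} (v w : Fin d → Fin b) (k : Fin d) :
    bEdge b d (canE v w k).1 (canE v w k).2 := by
  refine ⟨by simp [canE], ?_⟩
  intro j hj
  simp only [canE, Fin.coe_castSucc] at hj ⊢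
  by_cases h : (j : ℕ) < (k : ℕ)
  · simp [mix, h, show (j : ℕ) < (k : ℕ) + 1 by omega]
  · simp [mix, h, show ¬ (j : ℕ) < (k : ℕ) + 1 by omega]

lemma coord_pres {b d : ℕ} {H : Set (BVtx b d × BVtx b d)} {p q : BVtx b d}
    (h : Relation.ReflTransGen (fun p q => bEdge b d p q ∧ (p, q) ∈ H) p q) :
    ∀ j : Fin d, (j : ℕ) < (p.1 : ℕ) → p.2 j = q.2 j := by
  induction h using Relation.ReflTransGen.head_induction_on with
  | refl => intro j _; rfl
  | head h' h ih =>
    intro j hj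
    obtain ⟨⟨hlev, hco⟩, _⟩ := h'
    rw [hco j (by omega), ih j (by omega)]

lemma path_edges {b d : ℕ} {H : Set (BVtx b d × BVtx b d)} {w : Fin d → Fin b} {p : BVtx b d}
    (h : Relation.ReflTransGen (fun p q => bEdge b d p q ∧ (p, q) ∈ H) p (Fin.last d, w)) :
    ∀ k : Fin d, (p.1 : ℕ) ≤ (k : ℕ) → canE p.2 w k ∈ H := by
  induction h using Relation.ReflTransGen.head_induction_on with
  | refl =>
    intro k hk
    have := k.2
    simp only [Fin.val_last] at hk
    omega
  | @head a c h' hpath ih =>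
    intro k hk
    obtain ⟨he, hmem⟩ := h'
    obtain ⟨hlev, hco⟩ := he
    rcases eq_or_lt_of_le hk with heq | hlt
    · -- `a.1 = k`: the edge `(a, c)` is the canonical edge
      have hfull : Relation.ReflTransGen (fun p q => bEdge b d p q ∧ (p, q) ∈ H)
          a (Fin.last d, w) := Relation.ReflTransGen.head ⟨⟨hlev, hco⟩, hmem⟩ hpath
      have h1 : k.castSucc = a.1 := Fin.ext (by simp; omega)
      have h2 : mix a.2 w (k : ℕ) = a.2 := by
        funext j
        by_cases hjk : (j : ℕ) < (k : ℕ)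
        · have hcp := coord_pres hfull j (by omega)
          simp only [mix, if_pos hjk]
          exact hcp.symm
        · simp [mix, hjk]
      have h3 : k.succ = c.1 := Fin.ext (by simp; omega)
      have h4 : mix a.2 w ((k : ℕ) + 1) = c.2 := by
        funext j
        by_cases hjk : (j : ℕ) < (k : ℕ) + 1
        · have hcp := coord_pres hpath j (by omega)
          simp only [mix, if_pos hjk]
          exact hcp.symm
        · have := hco j (by omega)
          simp [mix, hjk, this]
      show canE a.2 w k ∈ H
      rw [canE, h1, h2, h3, h4]
      exact hmem
    · -- `a.1 < k`: use the induction hypothesis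
      have hc := ih k (by omega)
      have h2 : mix c.2 w (k : ℕ) = mix a.2 w (k : ℕ) := by
        funext j
        by_cases hjk : (j : ℕ) < (k : ℕ)
        · simp [mix, hjk]
        · simp [mix, hjk, hco j (by omega)]
      have h4 : mix c.2 w ((k : ℕ) + 1) = mix a.2 w ((k : ℕ) + 1) := by
        funext j
        by_cases hjk : (j : ℕ) < (k : ℕ) + 1
        · simp [mix, hjk]
        · simp [mix, hjk, hco j (by omega)]
      rw [canE, ← h2, ← h4]
      exact hc

lemma reach_of_canE {b d : ℕ} {H : Set (BVtx b d × BVtx b d)} {v w : Fin d → Fin b}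
    (hcan : ∀ k : Fin d, canE v w k ∈ H) :
    Relation.ReflTransGen (fun p q => bEdge b d p q ∧ (p, q) ∈ H)
      ((0 : Fin (d + 1)), v) (Fin.last d, w) := by
  have key : ∀ i : ℕ, (_ : i ≤ d) → Relation.ReflTransGen (fun p q => bEdge b d p q ∧ (p, q) ∈ H)
      ((0 : Fin (d + 1)), v) (⟨i, by omega⟩, mix v w i) := by
    intro i
    induction i with
    | zero =>
      intro _
      have hmix : mix v w 0 = v := funext fun j => by simp [mix]
      rw [hmix]
      exact Relation.ReflTransGen.refl
    | succ n ihn =>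
      intro hi
      refine (ihn (by omega)).tail ⟨?_, ?_⟩
      · exact (canE_bEdge v w ⟨n, by omega⟩)
      · exact hcan ⟨n, by omega⟩
  have hlast := key d le_rfl
  have hmix : mix v w d = w := funext fun j => by simp [mix, j.2]
  have hfin : (⟨d, by omega⟩ : Fin (d + 1)) = Fin.last d := rfl
  rwa [hmix, hfin] at hlast

theorem stmt11 (b d : ℕ) (hb : 2 ≤ b) (hd : 1 ≤ d)
    (H : Set (BVtx b d × BVtx b d)) (hH : ∀ e ∈ H, bEdge b d e.1 e.2)
    (v w : Fin d → Fin b) :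
    -- (d, w) is reachable from (0, v) using only edges of H iff the point
    -- (src v, snk w) is in none of the rectangles R(e) of the missing edges e
    Relation.ReflTransGen (fun p q => bEdge b d p q ∧ (p, q) ∈ H)
        ((0 : Fin (d + 1)), v) (Fin.last d, w)
      ↔ ∀ e : BVtx b d × BVtx b d, bEdge b d e.1 e.2 → e ∉ H →
          ¬ (alphaE (e.1.1 : ℕ) e.1.2 * b ^ (e.1.1 : ℕ) ≤ srcEnc v
              ∧ srcEnc v < (alphaE (e.1.1 : ℕ) e.1.2 + 1) * b ^ (e.1.1 : ℕ)
              ∧ betaE (e.1.1 : ℕ) e.2.2 * b ^ (d - 1 - (e.1.1 : ℕ)) ≤ snkEnc w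
              ∧ snkEnc w < (betaE (e.1.1 : ℕ) e.2.2 + 1) * b ^ (d - 1 - (e.1.1 : ℕ))) := by
  constructor
  · intro h e he heH hrect
    obtain ⟨h1, h2, h3, h4⟩ := hrect
    obtain ⟨hlev, hco⟩ := he
    have hi' : (e.1.1 : ℕ) < d := by have := e.2.1.2; omega
    set i : ℕ := (e.1.1 : ℕ) with hidef
    have hi : i < d := hi'
    have hv := (src_rect i hi v e.1.2).mp ⟨h1, h2⟩
    have hw := (snk_rect i hi w e.2.2).mp ⟨h3, h4⟩
    have hcanek := path_edges h ⟨i, hi⟩ (by simp)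
    have hek : e = canE v w ⟨i, hi⟩ := by
      have he1 : e.1.1 = (⟨i, hi⟩ : Fin d).castSucc := Fin.ext (by simp; rfl)
      have he2 : e.1.2 = mix v w i := by
        funext j
        by_cases hji : (j : ℕ) < i
        · rw [hco j (by omega)]
          simp [mix, hji, (hw j (by omega)).symm]
        · simp [mix, hji, (hv j (by omega)).symm]
      have he3 : e.2.1 = (⟨i, hi⟩ : Fin d).succ := Fin.ext (by simp; omega)
      have he4 : e.2.2 = mix v w (i + 1) := by
        funext j
        by_cases hji : (j : ℕ) < i + 1
        · simp [mix, hji, (hw j (by omega)).symm]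
        · rw [← hco j (by omega)]
          simp [mix, hji, (hv j (by omega)).symm]
      have : e = ((e.1.1, e.1.2), (e.2.1, e.2.2)) := rfl
      rw [this, he1, he2, he3, he4]
      rfl
    rw [← hek] at hcanek
    exact heH hcanek
  · intro hrect
    apply reach_of_canE
    intro k
    by_contra hne
    refine hrect (canE v w k) (canE_bEdge v w k) hne ?_
    have hcoe : ((canE v w k).1.1 : ℕ) = (k : ℕ) := by simp [canE]
    have hk : (k : ℕ) < d := k.2
    rw [hcoe]
    have hsrc := (src_rect (k : ℕ) hk v (mix v w (k : ℕ))).mpr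
      (fun j hj => by simp [mix, show ¬ (j : ℕ) < (k : ℕ) by omega])
    have hsnk := (snk_rect (k : ℕ) hk w (mix v w ((k : ℕ) + 1))).mpr
      (fun j hj => by simp [mix, show (j : ℕ) < (k : ℕ) + 1 by omega])
    exact ⟨hsrc.1, hsrc.2, hsnk.1, hsnk.2⟩
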